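/- Let G be a group acting weakly on a groupoid X (a weak right action given by functor μ: X × G → X with natural isomorphisms α and a satisfying the coherence axioms). Then composition in the transformation groupoid ⌊X/G⌋, defined by (δ, h) ∘ (γ, g) = (α_{h,g}^z ∘ (δ·g) ∘ γ, hg) for γ: x → y·g and δ: y → z·h, is associative, and (a^x, e) is a two-sided identity at each object x. -/

import Mathlib

open CategoryTheory

/-- Composition in the transformation groupoid `⌊X/G⌋` of a weak right action:
for `f = (γ, g) : x → y` (with `γ : x ⟶ y·g`) and `f' = (δ, h) : y → z`, the composite
is `(α_{h,g}^z ∘ (δ·g) ∘ γ, hg)`. -/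
def tcomp {C : Type*} [Groupoid C] {G : Type*} [Group G]
    (act : G → C ⥤ C) (α : ∀ g h : G, act g ⋙ act h ≅ act (g * h))
    {x y z : C} (f : Σ g : G, x ⟶ (act g).obj y) (f' : Σ h : G, y ⟶ (act h).obj z) :
    Σ k : G, x ⟶ (act k).obj z :=
  ⟨f'.1 * f.1, f.2 ≫ (act f.1).map f'.2 ≫ (α f'.1 f.1).hom.app z⟩

private lemma sigma_hom_ext {C : Type*} [Groupoid C] {G : Type*} [Group G]
    (act : G → C ⥤ C) {x z : C} {k k' : G} (p : k = k')
    {m : x ⟶ (act k).obj z} {m' : x ⟶ (act k').obj z}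
    (h : m ≫ eqToHom (by rw [p]) = m') :
    (⟨k, m⟩ : Σ g : G, x ⟶ (act g).obj z) = ⟨k', m'⟩ := by
  subst p; simpa using h

theorem stmt14 {C : Type*} [Groupoid C] {G : Type*} [Group G]
    -- a weak right action of G on C
    (act : G → C ⥤ C)
    (α : ∀ g h : G, act g ⋙ act h ≅ act (g * h))
    (a : 𝟭 C ≅ act 1)
    (hassoc : ∀ (g h k : G) (x : C),
      (act k).map ((α g h).hom.app x) ≫ (α (g * h) k).hom.app x ≫
          eqToHom (by rw [mul_assoc]) =
        (α h k).hom.app ((act g).obj x) ≫ (α g (h * k)).hom.app x)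
    (hunitl : ∀ (g : G) (x : C),
      (act g).map (a.hom.app x) ≫ (α 1 g).hom.app x ≫ eqToHom (by rw [one_mul]) =
        𝟙 ((act g).obj x))
    (hunitr : ∀ (g : G) (x : C),
      a.hom.app ((act g).obj x) ≫ (α g 1).hom.app x ≫ eqToHom (by rw [mul_one]) =
        𝟙 ((act g).obj x)) :
    -- composition in the transformation groupoid is associative...
    (∀ (x y z w : C) (f : Σ g : G, x ⟶ (act g).obj y) (f' : Σ g : G, y ⟶ (act g).obj z)
        (f'' : Σ g : G, z ⟶ (act g).obj w),
      tcomp act α (tcomp act α f f') f'' = tcomp act α f (tcomp act α f' f'')) ∧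
    -- ...and (aˣ, e) is a two-sided identity at each object x
    (∀ (x y : C) (f : Σ g : G, x ⟶ (act g).obj y),
      tcomp act α (⟨1, a.hom.app x⟩ : Σ g : G, x ⟶ (act g).obj x) f = f ∧
      tcomp act α f (⟨1, a.hom.app y⟩ : Σ g : G, y ⟶ (act g).obj y) = f) := by
  constructor
  · intro x y z w f f' f''
    apply sigma_hom_ext act (by simp [tcomp, mul_assoc])
    simp only [tcomp, Category.assoc]
    congr 1
    rw [Functor.map_comp, Functor.map_comp, Category.assoc, Category.assoc]
    congr 1
    have hnat := (α f'.1 f.1).hom.naturality f''.2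
    have h := hassoc f''.1 f'.1 f.1 w
    rw [← Category.assoc, ← hnat]
    simp only [Functor.comp_map, Category.assoc]
    congr 1
    rw [← cancel_mono (eqToHom (show (act (f''.1 * f'.1 * f.1)).obj w =
      (act (f''.1 * (f'.1 * f.1))).obj w by rw [mul_assoc]))]
    simp only [Category.assoc, eqToHom_trans, eqToHom_refl, Category.comp_id]
    erw [eqToHom_trans, eqToHom_refl, Category.comp_id]; exact h.symm
  · intro x y f
    constructor
    · apply sigma_hom_ext act (mul_one f.1)
      simp only [tcomp]
      have hnat := a.hom.naturality f.2
      simp only [Functor.id_map] at hnat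
      simp only [Category.assoc]
      rw [← reassoc_of% hnat]
      rw [hunitr f.1 y]
      simp
    · apply sigma_hom_ext act (one_mul f.1)
      simp only [tcomp, Category.assoc]
      rw [hunitl f.1 y]
      simp
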